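/- The sl2-module D = D_{2;0}, induced from the one-dimensional C[h,Ω]-module with h-eigenvalue 2 and Casimir eigenvalue 0, is not simple: it contains a highest-weight vector u of h-eigenvalue −2 and a highest-weight vector v of h-eigenvalue 0 satisfying e·u = 0, e·v = 0 and u = f·v, and f acts injectively on all of D. -/

import Mathlib

set_option linter.unusedSectionVars false
set_option linter.unusedVariables false
set_option maxHeartbeats 1000000

/-- The `μ`-eigenspace of the action of an element `H` of a Lie algebra on a module. -/
def hEigenspace {g : Type} [LieRing g] [LieAlgebra ℂ g] (H : g)
    (M : Type) [AddCommGroup M] [Module ℂ M] [LieRingModule g M] [LieModule ℂ g M]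
    (μ : ℂ) : Submodule ℂ M where
  carrier := {m : M | ⁅H, m⁆ = μ • m}
  add_mem' := by
    intro a b ha hb
    simp only [Set.mem_setOf_eq] at *
    rw [lie_add, ha, hb, smul_add]
  zero_mem' := by simp
  smul_mem' := by
    intro c a ha
    simp only [Set.mem_setOf_eq] at *
    rw [lie_smul, ha, smul_comm]

namespace NotSimpleAux
open Finsupp
noncomputable section
def cE (n : ℤ) : ℂ := -((n:ℂ)+1)*((n:ℂ)+2)
def Hop : (ℤ →₀ ℂ) →ₗ[ℂ] (ℤ →₀ ℂ) := Finsupp.lsum ℂ fun n => (2+2*(n:ℂ)) • Finsupp.lsingle n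
def Eop : (ℤ →₀ ℂ) →ₗ[ℂ] (ℤ →₀ ℂ) := Finsupp.lsum ℂ fun n => cE n • Finsupp.lsingle (n+1)
def Fop : (ℤ →₀ ℂ) →ₗ[ℂ] (ℤ →₀ ℂ) := Finsupp.lmapDomain ℂ ℂ (fun n => n - 1)

lemma Hop_single (n : ℤ) (c : ℂ) : Hop (single n c) = (2+2*(n:ℂ)) • single n c := by
  rw [Hop, Finsupp.lsum_single]; rfl
lemma Eop_single (n : ℤ) (c : ℂ) : Eop (single n c) = cE n • single (n+1) c := by
  rw [Eop, Finsupp.lsum_single]; rfl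
lemma Fop_single (n : ℤ) (c : ℂ) : Fop (single n c) = single (n-1) c := by
  rw [Fop]; exact Finsupp.mapDomain_single
lemma Fop_inj : Function.Injective Fop := by
  have : Function.Injective (fun n : ℤ => n - 1) := fun a b h => by simpa using h
  exact Finsupp.mapDomain_injective this
lemma commHE : Hop ∘ₗ Eop - Eop ∘ₗ Hop = (2:ℂ) • Eop := by
  apply Finsupp.lhom_ext; intro n c
  simp only [LinearMap.sub_apply, LinearMap.comp_apply, LinearMap.smul_apply,
    Hop_single, Eop_single, map_smul, smul_smul]
  rw [← sub_smul]; congr 1; rw [cE]; push_cast; ring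
lemma commHF : Hop ∘ₗ Fop - Fop ∘ₗ Hop = (-2:ℂ) • Fop := by
  apply Finsupp.lhom_ext; intro n c
  simp only [LinearMap.sub_apply, LinearMap.comp_apply, LinearMap.smul_apply,
    Hop_single, Fop_single, map_smul, smul_smul]
  rw [← sub_smul]; congr 1; push_cast; ring
lemma commEF : Eop ∘ₗ Fop - Fop ∘ₗ Eop = Hop := by
  apply Finsupp.lhom_ext; intro n c
  simp only [LinearMap.sub_apply, LinearMap.comp_apply, LinearMap.smul_apply,
    Hop_single, Eop_single, Fop_single, map_smul, smul_smul]
  rw [show n-1+1 = n by ring, show n+1-1 = n by ring, ← sub_smul]; congr 1; rw [cE, cE]; push_cast; ring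
lemma Hop_apply (f : ℤ →₀ ℂ) (m : ℤ) : Hop f m = (2+2*(m:ℂ)) * f m := by
  induction f using Finsupp.induction_linear with
  | zero => simp
  | add f g hf hg => simp only [map_add, Finsupp.add_apply, hf, hg]; ring
  | single n c =>
    rw [Hop_single]
    simp only [Finsupp.smul_apply, smul_eq_mul, Finsupp.single_apply]
    split_ifs with h
    · subst h; ring
    · ring
lemma Eop_apply (f : ℤ →₀ ℂ) (m : ℤ) : Eop f m = cE (m-1) * f (m-1) := by
  induction f using Finsupp.induction_linear with
  | zero => simp
  | add f g hf hg => simp only [map_add, Finsupp.add_apply, hf, hg]; ring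
  | single n c =>
    rw [Eop_single]
    simp only [Finsupp.smul_apply, smul_eq_mul, Finsupp.single_apply]
    split_ifs with h1 h2 h2
    · have : n = m - 1 := by omega
      subst this; ring
    · omega
    · omega
    · ring
lemma Fop_apply (f : ℤ →₀ ℂ) (m : ℤ) : Fop f m = f (m+1) := by
  have hinj : Function.Injective (fun n : ℤ => n - 1) := fun a b h => by simpa using h
  have := Finsupp.mapDomain_apply hinj f (m+1)
  simpa [Fop] using this


lemma hef_cases {g : Type} [LieRing g] [LieAlgebra ℂ g] {H E F : g}
    (hspan : Submodule.span ℂ ({H, E, F} : Set g) = ⊤) (P : g → Prop)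
    (hH : P H) (hE : P E) (hF : P F) (h0 : P 0)
    (hadd : ∀ x y, P x → P y → P (x+y)) (hsmul : ∀ (c:ℂ) (x), P x → P (c•x)) :
    ∀ x, P x := by
  intro x
  have hx : x ∈ Submodule.span ℂ ({H, E, F} : Set g) := by rw [hspan]; trivial
  induction hx using Submodule.span_induction with
  | mem y hy => rcases hy with rfl | rfl | rfl <;> assumption
  | zero => exact h0
  | add y z _ _ hy hz => exact hadd y z hy hz
  | smul c y _ hy => exact hsmul c y hy



lemma hef_li (g : Type) [LieRing g] [LieAlgebra ℂ g] (H E F : g)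
    (hHE : ⁅H, E⁆ = (2 : ℂ) • E) (hHF : ⁅H, F⁆ = (-2 : ℂ) • F) (hEF : ⁅E, F⁆ = H)
    (hH0 : H ≠ 0) (hE0 : E ≠ 0) (hF0 : F ≠ 0) : LinearIndependent ℂ ![H,E,F] := by
  rw [Fintype.linearIndependent_iff]
  intro c hsum i
  rw [Fin.sum_univ_three] at hsum
  simp only [Matrix.cons_val_zero, Matrix.cons_val_one, Matrix.head_cons,
    Matrix.cons_val_two, Matrix.tail_cons] at hsum
  have h1 : (2*c 1) • E + (-2*c 2) • F = 0 := by
    have := congrArg (fun y => ⁅H, y⁆) hsum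
    simpa [lie_add, lie_smul, hHE, hHF, smul_smul, mul_comm] using this
  have h2 : (4*c 1) • E + (4*c 2) • F = 0 := by
    have h := congrArg (fun y => ⁅H, y⁆) h1
    simp only [lie_add, lie_smul, hHE, hHF, lie_zero, smul_smul] at h
    linear_combination (norm := module) h
  have h3 : (8 * c 1) • E = 0 := by
    linear_combination (norm := module) (2:ℂ) • h1 + h2
  have hb : c 1 = 0 := by
    rcases smul_eq_zero.1 h3 with h | h
    · linear_combination h/8
    · exact absurd h hE0
  have hc : c 2 = 0 := by
    rw [hb] at h2
    simp only [mul_zero, zero_smul, zero_add] at h2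
    rcases smul_eq_zero.1 h2 with h | h
    · linear_combination h/4
    · exact absurd h hF0
  have ha : c 0 = 0 := by
    rw [hb, hc] at hsum
    simp only [zero_smul, add_zero] at hsum
    rcases smul_eq_zero.1 hsum with h | h
    · exact h
    · exact absurd h hH0
  fin_cases i <;> assumption


section
variable {g M : Type} [LieRing g] [LieAlgebra ℂ g] [AddCommGroup M] [Module ℂ M]
  [LieRingModule g M] [LieModule ℂ g M] {H E F : g}

lemma swapEF (hEF : ⁅E,F⁆ = H) (X : M) : ⁅E,⁅F,X⁆⁆ = ⁅F,⁅E,X⁆⁆ + ⁅H,X⁆ := by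
  rw [leibniz_lie, hEF]; abel

lemma swapEH (hHE : ⁅H,E⁆ = (2:ℂ)•E) (X : M) : ⁅E,⁅H,X⁆⁆ = ⁅H,⁅E,X⁆⁆ - (2:ℂ)•⁅E,X⁆ := by
  rw [leibniz_lie H E X, hHE, smul_lie]; abel
lemma swapHF (hHF : ⁅H,F⁆ = (-2:ℂ)•F) (X : M) : ⁅H,⁅F,X⁆⁆ = ⁅F,⁅H,X⁆⁆ - (2:ℂ)•⁅F,X⁆ := by
  rw [leibniz_lie H F X, hHF, smul_lie]; module

variable (H E F) in
def Cas (m : M) : M := ⁅E, ⁅F, m⁆⁆ + ⁅F, ⁅E, m⁆⁆ + (2⁻¹ : ℂ) • ⁅H, ⁅H, m⁆⁆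

lemma cas_commH (hHE : ⁅H,E⁆ = (2:ℂ)•E) (hHF : ⁅H,F⁆ = (-2:ℂ)•F) (hEF : ⁅E,F⁆ = H) (m : M) :
    Cas H E F ⁅H, m⁆ = ⁅H, Cas H E F m⁆ := by
  simp only [Cas, lie_add, lie_sub, lie_smul, swapEF hEF, swapEH hHE, swapHF hHF]
  all_goals module
lemma cas_commE (hHE : ⁅H,E⁆ = (2:ℂ)•E) (hHF : ⁅H,F⁆ = (-2:ℂ)•F) (hEF : ⁅E,F⁆ = H) (m : M) :
    Cas H E F ⁅E, m⁆ = ⁅E, Cas H E F m⁆ := by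
  simp only [Cas, lie_add, lie_sub, lie_smul, swapEF hEF, swapEH hHE, swapHF hHF]
  all_goals module
lemma cas_commF (hHE : ⁅H,E⁆ = (2:ℂ)•E) (hHF : ⁅H,F⁆ = (-2:ℂ)•F) (hEF : ⁅E,F⁆ = H) (m : M) :
    Cas H E F ⁅F, m⁆ = ⁅F, Cas H E F m⁆ := by
  simp only [Cas, lie_add, lie_sub, lie_smul, swapEF hEF, swapEH hHE, swapHF hHF]
  all_goals module

lemma eigFE (hEF : ⁅E,F⁆ = H) {m : M} {μ : ℂ} (hm : ⁅H,m⁆ = μ•m)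
    (hc : Cas H E F m = 0) : ⁅F,⁅E,m⁆⁆ = (-(2⁻¹)*μ - 4⁻¹*μ^2) • m := by
  rw [Cas, swapEF hEF, hm, lie_smul, hm] at hc
  calc ⁅F,⁅E,m⁆⁆ = (2⁻¹:ℂ) • (⁅F,⁅E,m⁆⁆ + ⁅F,⁅E,m⁆⁆) := by module
    _ = (2⁻¹:ℂ) • (-(μ • m) - (2⁻¹:ℂ) • μ • μ • m) := by
        rw [show ⁅F,⁅E,m⁆⁆ + ⁅F,⁅E,m⁆⁆ = -(μ • m) - (2⁻¹:ℂ) • μ • μ • m by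
          have := hc; linear_combination (norm := module) this]
    _ = (-(2⁻¹)*μ - 4⁻¹*μ^2) • m := by module

lemma eigEF (hEF : ⁅E,F⁆ = H) {m : M} {μ : ℂ} (hm : ⁅H,m⁆ = μ•m)
    (hc : Cas H E F m = 0) : ⁅E,⁅F,m⁆⁆ = ((2⁻¹)*μ - 4⁻¹*μ^2) • m := by
  rw [swapEF hEF, eigFE hEF hm hc, hm]; module
end
section
variable {g M : Type} [LieRing g] [LieAlgebra ℂ g] [AddCommGroup M] [Module ℂ M]
  [LieRingModule g M] [LieModule ℂ g M] {H E F : g}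

def pUp (E : g) (v₀ : M) : ℕ → M
  | 0 => v₀
  | k+1 => (cE (k:ℤ))⁻¹ • ⁅E, pUp E v₀ k⁆

def pDown (F : g) (v₀ : M) : ℕ → M
  | 0 => v₀
  | k+1 => ⁅F, pDown F v₀ k⁆

def chain (E F : g) (v₀ : M) : ℤ → M
  | .ofNat k => pUp E v₀ k
  | .negSucc k => pDown F v₀ (k+1)

lemma cE_nat_ne (k : ℕ) : cE (k:ℤ) ≠ 0 := by
  rw [cE]
  push_cast
  intro h
  rcases mul_eq_zero.1 h with h | h
  · have : ((k:ℂ)+1) = 0 := by linear_combination -h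
    have := congrArg Complex.re this
    simp at this
    linarith [Nat.cast_nonneg (α := ℝ) k]
  · have := congrArg Complex.re h
    simp at this
    linarith [Nat.cast_nonneg (α := ℝ) k]

variable (hHE : ⁅H,E⁆ = (2:ℂ)•E) (hHF : ⁅H,F⁆ = (-2:ℂ)•F) (hEF : ⁅E,F⁆ = H)
  {v₀ : M} (hHv : ⁅H, v₀⁆ = (2 : ℂ) • v₀) (hcas : ∀ m : M, Cas H E F m = 0)

include hHE hHv in
lemma pUp_H (k : ℕ) : ⁅H, (pUp E v₀ k : M)⁆ = (2+2*(k:ℂ)) • pUp E v₀ k := by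
  induction k with
  | zero => simpa [pUp] using hHv
  | succ k ih =>
    rw [pUp, lie_smul, leibniz_lie, hHE, smul_lie, ih, lie_smul]
    push_cast
    module

include hHE hHv in
lemma pUp_E (k : ℕ) : ⁅E, (pUp E v₀ k : M)⁆ = cE (k:ℤ) • pUp E v₀ (k+1) := by
  rw [pUp, smul_smul, mul_inv_cancel₀ (cE_nat_ne k), one_smul]

include hHE hEF hHv hcas in
lemma pUp_F (k : ℕ) : ⁅F, (pUp E v₀ (k+1) : M)⁆ = pUp E v₀ k := by
  rw [pUp, lie_smul, eigFE hEF (pUp_H hHE hHv k) (hcas _), smul_smul]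
  rw [show (cE (k:ℤ))⁻¹ * (-(2⁻¹)*(2+2*(k:ℂ)) - 4⁻¹*(2+2*(k:ℂ))^2) = 1 by
    rw [inv_mul_eq_one₀ (cE_nat_ne k), cE]; push_cast; ring]
  exact one_smul _ _
include hHF hHv in
lemma pDown_H (k : ℕ) : ⁅H, (pDown F v₀ k : M)⁆ = (2-2*(k:ℂ)) • pDown F v₀ k := by
  induction k with
  | zero => simpa [pDown] using hHv
  | succ k ih =>
    rw [pDown, leibniz_lie, hHF, smul_lie, ih, lie_smul]
    push_cast
    module

include hHF hEF hHv hcas in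
lemma pDown_E (k : ℕ) : ⁅E, (pDown F v₀ (k+1) : M)⁆ = ((1-(k:ℂ))*(k:ℂ)) • pDown F v₀ k := by
  rw [pDown, eigEF hEF (pDown_H hHF hHv k) (hcas _)]
  congr 1
  ring

lemma chain_ofNat (k : ℕ) : (chain E F v₀ (Int.ofNat k) : M) = pUp E v₀ k := rfl
lemma chain_negSucc (k : ℕ) : (chain E F v₀ (Int.negSucc k) : M) = pDown F v₀ (k+1) := rfl
lemma chain_neg (k : ℕ) : (chain E F v₀ (-(k:ℤ)) : M) = pDown F v₀ k := by
  cases k with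
  | zero => rfl
  | succ k =>
    rw [show (-((k+1:ℕ):ℤ)) = Int.negSucc k by rw [Int.negSucc_eq]; push_cast; ring]
    exact chain_negSucc k

include hHE hHF hHv in
lemma chain_H (n : ℤ) : ⁅H, (chain E F v₀ n : M)⁆ = (2+2*(n:ℂ)) • chain E F v₀ n := by
  cases n with
  | ofNat k =>
    rw [chain_ofNat, pUp_H hHE hHv k]
    norm_num
  | negSucc k =>
    rw [chain_negSucc, pDown_H hHF hHv (k+1), Int.cast_negSucc]
    push_cast
    module

include hHE hHF hEF hHv hcas in
lemma chain_F (n : ℤ) : ⁅F, (chain E F v₀ n : M)⁆ = chain E F v₀ (n-1) := by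
  cases n with
  | ofNat k =>
    cases k with
    | zero =>
      rw [show ((Int.ofNat 0) - 1 : ℤ) = Int.negSucc 0 by decide, chain_negSucc]
      rfl
    | succ k =>
      rw [show ((Int.ofNat (k+1)) - 1 : ℤ) = Int.ofNat k by simp [Int.ofNat_eq_coe], chain_ofNat, chain_ofNat]
      exact pUp_F hHE hEF hHv hcas k
  | negSucc k =>
    rw [show ((Int.negSucc k) - 1 : ℤ) = Int.negSucc (k+1) by rw [Int.negSucc_eq, Int.negSucc_eq]; push_cast; ring,
      chain_negSucc, chain_negSucc]
    rfl

include hHE hHF hEF hHv hcas in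
lemma chain_E (n : ℤ) : ⁅E, (chain E F v₀ n : M)⁆ = cE n • chain E F v₀ (n+1) := by
  cases n with
  | ofNat k =>
    rw [show ((Int.ofNat k) + 1 : ℤ) = Int.ofNat (k+1) by simp [Int.ofNat_eq_coe], chain_ofNat, chain_ofNat]
    exact pUp_E hHE hHv k
  | negSucc k =>
    rw [show ((Int.negSucc k) + 1 : ℤ) = -(k:ℤ) by rw [Int.negSucc_eq]; ring,
      chain_negSucc, chain_neg, pDown_E hHF hEF hHv hcas k]
    congr 1
    rw [cE, Int.cast_negSucc]
    push_cast
    ring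
end

end
end NotSimpleAux

open NotSimpleAux Finsupp in
theorem induced_module_two_zero_not_simple
    (g : Type) [LieRing g] [LieAlgebra ℂ g]
    (H E F : g)
    (hHE : ⁅H, E⁆ = (2 : ℂ) • E) (hHF : ⁅H, F⁆ = (-2 : ℂ) • F) (hEF : ⁅E, F⁆ = H)
    (hspan : Submodule.span ℂ {H, E, F} = ⊤)
    (M : Type) [AddCommGroup M] [Module ℂ M] [LieRingModule g M] [LieModule ℂ g M]
    (v₀ : M) (hv₀ : v₀ ≠ 0)
    (hHv : ⁅H, v₀⁆ = (2 : ℂ) • v₀)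
    (hΩv : ⁅E, ⁅F, v₀⁆⁆ + ⁅F, ⁅E, v₀⁆⁆ + (2⁻¹ : ℂ) • ⁅H, ⁅H, v₀⁆⁆ = 0)
    (hgen : LieSubmodule.lieSpan ℂ g {v₀} = ⊤)
    (huniv : ∀ (M' : Type) [AddCommGroup M'] [Module ℂ M'] [LieRingModule g M']
      [LieModule ℂ g M'] (v' : M'),
      ⁅H, v'⁆ = (2 : ℂ) • v' →
      ⁅E, ⁅F, v'⁆⁆ + ⁅F, ⁅E, v'⁆⁆ + (2⁻¹ : ℂ) • ⁅H, ⁅H, v'⁆⁆ = 0 →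
      ∃! φ : M →ₗ[ℂ] M', (∀ (x : g) (m : M), φ ⁅x, m⁆ = ⁅x, φ m⁆) ∧ φ v₀ = v') :
    (∃ Q : LieSubmodule ℂ g M, Q ≠ ⊥ ∧ Q ≠ ⊤) ∧
      (∃ u w : M, u ≠ 0 ∧ w ≠ 0 ∧ ⁅E, u⁆ = 0 ∧ ⁅E, w⁆ = 0 ∧
        ⁅H, u⁆ = (-2 : ℂ) • u ∧ ⁅H, w⁆ = 0 ∧ u = ⁅F, w⁆) ∧
      Function.Injective (fun m : M => ⁅F, m⁆) := by
  classical
  -- nondegeneracy of H, E, F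
  have hH0 : H ≠ 0 := by
    intro h
    apply hv₀
    have h2 : (2:ℂ) • v₀ = 0 := by rw [← hHv, h, zero_lie]
    rcases smul_eq_zero.1 h2 with h3 | h3
    · norm_num at h3
    · exact h3
  have hE0 : E ≠ 0 := fun h => hH0 (by rw [← hEF, h, zero_lie])
  have hF0 : F ≠ 0 := fun h => hH0 (by rw [← hEF, h, lie_zero])
  have li := hef_li g H E F hHE hHF hEF hH0 hE0 hF0
  have hrange : Set.range ![H,E,F] = ({H,E,F} : Set g) := by
    ext x; simp [Matrix.range_cons, Matrix.range_empty]; tauto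
  have hsp : ⊤ ≤ Submodule.span ℂ (Set.range ![H,E,F]) := by
    rw [hrange, hspan]
  let b : Module.Basis (Fin 3) ℂ g := Module.Basis.mk li hsp
  let ρ : g →ₗ[ℂ] Module.End ℂ (ℤ →₀ ℂ) := b.constr ℂ ![Hop, Eop, Fop]
  have hρH : ρ H = Hop := by
    have hb : b 0 = H := by rw [Module.Basis.mk_apply]; rfl
    rw [← hb, Module.Basis.constr_basis]; rfl
  have hρE : ρ E = Eop := by
    have hb : b 1 = E := by rw [Module.Basis.mk_apply]; rfl
    rw [← hb, Module.Basis.constr_basis]; rfl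
  have hρF : ρ F = Fop := by
    have hb : b 2 = F := by rw [Module.Basis.mk_apply]; rfl
    rw [← hb, Module.Basis.constr_basis]; rfl
  have cHE : ∀ f : ℤ →₀ ℂ, Hop (Eop f) - Eop (Hop f) = (2:ℂ) • Eop f := fun f => by
    have := congrArg (fun L : (ℤ→₀ℂ) →ₗ[ℂ] (ℤ→₀ℂ) => L f) commHE
    simpa using this
  have cHF : ∀ f : ℤ →₀ ℂ, Hop (Fop f) - Fop (Hop f) = (-2:ℂ) • Fop f := fun f => by
    have := congrArg (fun L : (ℤ→₀ℂ) →ₗ[ℂ] (ℤ→₀ℂ) => L f) commHF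
    simpa using this
  have cEF : ∀ f : ℤ →₀ ℂ, Eop (Fop f) - Fop (Eop f) = Hop f := fun f => by
    have := congrArg (fun L : (ℤ→₀ℂ) →ₗ[ℂ] (ℤ→₀ℂ) => L f) commEF
    simpa using this
  have hrho : ∀ x y : g, ∀ f, ρ ⁅x,y⁆ f = ρ x (ρ y f) - ρ y (ρ x f) := by
    apply hef_cases hspan (P := fun x => ∀ y f, ρ ⁅x,y⁆ f = ρ x (ρ y f) - ρ y (ρ x f))
    · apply hef_cases hspan (P := fun y => ∀ f, ρ ⁅H,y⁆ f = ρ H (ρ y f) - ρ y (ρ H f))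
      · intro f; simp [lie_self]
      · intro f
        rw [hHE]
        simp only [map_smul, hρH, hρE, LinearMap.smul_apply]
        linear_combination (norm := module) -cHE f
      · intro f
        rw [hHF]
        simp only [map_smul, hρH, hρF, LinearMap.smul_apply]
        linear_combination (norm := module) -cHF f
      · intro f; simp
      · intro y z hy hz f
        rw [lie_add]
        simp only [map_add, LinearMap.add_apply]
        rw [hy f, hz f]; abel
      · intro c y hy f
        rw [lie_smul]
        simp only [map_smul, LinearMap.smul_apply]
        rw [hy f]; module
    · apply hef_cases hspan (P := fun y => ∀ f, ρ ⁅E,y⁆ f = ρ E (ρ y f) - ρ y (ρ E f))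
      · intro f
        rw [← lie_skew, hHE]
        simp only [map_neg, map_smul, hρH, hρE, LinearMap.neg_apply, LinearMap.smul_apply]
        linear_combination (norm := module) cHE f
      · intro f; simp [lie_self]
      · intro f
        rw [hEF]
        simp only [hρH, hρE, hρF]
        linear_combination (norm := module) -cEF f
      · intro f; simp
      · intro y z hy hz f
        rw [lie_add]
        simp only [map_add, LinearMap.add_apply]
        rw [hy f, hz f]; abel
      · intro c y hy f
        rw [lie_smul]
        simp only [map_smul, LinearMap.smul_apply]
        rw [hy f]; module
    · apply hef_cases hspan (P := fun y => ∀ f, ρ ⁅F,y⁆ f = ρ F (ρ y f) - ρ y (ρ F f))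
      · intro f
        rw [← lie_skew, hHF]
        simp only [map_neg, map_smul, hρH, hρF, LinearMap.neg_apply, LinearMap.smul_apply]
        linear_combination (norm := module) cHF f
      · intro f
        rw [← lie_skew, hEF]
        simp only [map_neg, hρH, hρE, hρF, LinearMap.neg_apply]
        linear_combination (norm := module) cEF f
      · intro f; simp [lie_self]
      · intro f; simp
      · intro y z hy hz f
        rw [lie_add]
        simp only [map_add, LinearMap.add_apply]
        rw [hy f, hz f]; abel
      · intro c y hy f
        rw [lie_smul]
        simp only [map_smul, LinearMap.smul_apply]
        rw [hy f]; module
    · intro y f; simp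
    · intro x y hx hy y' f
      rw [add_lie]
      simp only [map_add, LinearMap.add_apply]
      rw [hx y' f, hy y' f]; abel
    · intro c x hx y f
      rw [smul_lie]
      simp only [map_smul, LinearMap.smul_apply]
      rw [hx y f]; module
  letI : LieRingModule g (ℤ →₀ ℂ) :=
    { bracket := fun x f => ρ x f
      add_lie := fun x y f => by simp only [map_add, LinearMap.add_apply]
      lie_add := fun x f1 f2 => by simp only [map_add]
      leibniz_lie := fun x y f => by
        show ρ x (ρ y f) = ρ ⁅x,y⁆ f + ρ y (ρ x f)
        rw [hrho x y f]; abel }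
  haveI : LieModule ℂ g (ℤ →₀ ℂ) :=
    { smul_lie := fun c x f => by
        show ρ (c • x) f = c • ρ x f
        simp only [map_smul, LinearMap.smul_apply]
      lie_smul := fun c x f => by
        show ρ x (c • f) = c • ρ x f
        simp only [map_smul] }
  have brkt : ∀ (x : g) (f : ℤ →₀ ℂ), ⁅x, f⁆ = ρ x f := fun x f => rfl
  have hδH : ⁅H, (single 0 1 : ℤ →₀ ℂ)⁆ = (2:ℂ) • single 0 1 := by
    rw [brkt, hρH, Hop_single]; norm_num
  have hδΩ : ⁅E, ⁅F, (single 0 1 : ℤ →₀ ℂ)⁆⁆ + ⁅F, ⁅E, (single 0 1 : ℤ →₀ ℂ)⁆⁆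
      + (2⁻¹ : ℂ) • ⁅H, ⁅H, (single 0 1 : ℤ →₀ ℂ)⁆⁆ = 0 := by
    simp only [brkt, hρH, hρE, hρF, Hop_single, Eop_single, Fop_single, map_smul]
    norm_num [cE]
  obtain ⟨φ, ⟨hφ, hφv⟩, -⟩ := huniv (ℤ →₀ ℂ) (single 0 1) hδH hδΩ
  have hφH : ∀ m : M, φ ⁅H, m⁆ = Hop (φ m) := fun m => by rw [hφ H m, brkt, hρH]
  have hφE : ∀ m : M, φ ⁅E, m⁆ = Eop (φ m) := fun m => by rw [hφ E m, brkt, hρE]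
  have hφF : ∀ m : M, φ ⁅F, m⁆ = Fop (φ m) := fun m => by rw [hφ F m, brkt, hρF]
  -- Casimir vanishes on M
  have casAdd : ∀ m n : M, Cas H E F (m+n) = Cas H E F m + Cas H E F n := fun m n => by
    simp only [Cas, lie_add, smul_add]; abel
  have casSmul : ∀ (c : ℂ) (m : M), Cas H E F (c • m) = c • Cas H E F m := fun c m => by
    simp only [Cas, lie_smul]; module
  have comm : ∀ x : g, ∀ m : M, Cas H E F ⁅x,m⁆ = ⁅x, Cas H E F m⁆ := by
    apply hef_cases hspan (P := fun x => ∀ m : M, Cas H E F ⁅x,m⁆ = ⁅x, Cas H E F m⁆)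
    · exact cas_commH hHE hHF hEF
    · exact cas_commE hHE hHF hEF
    · exact cas_commF hHE hHF hEF
    · intro m; simp [Cas]
    · intro x y hx hy m
      rw [add_lie, casAdd, hx m, hy m, add_lie]
    · intro c x hx m
      rw [smul_lie, casSmul, hx m, smul_lie]
  have hcasM : ∀ m : M, Cas H E F m = 0 := by
    let K : LieSubmodule ℂ g M :=
      { carrier := {m : M | Cas H E F m = 0}
        add_mem' := by
          intro a c ha hc
          simp only [Set.mem_setOf_eq] at *
          rw [casAdd, ha, hc, add_zero]
        zero_mem' := by simp [Cas]
        smul_mem' := by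
          intro c a ha
          simp only [Set.mem_setOf_eq] at *
          rw [casSmul, ha, smul_zero]
        lie_mem := by
          intro x m hm
          simp only [Set.mem_setOf_eq] at *
          rw [comm, hm, lie_zero] }
    have hv0K : v₀ ∈ K := hΩv
    have hle : LieSubmodule.lieSpan ℂ g {v₀} ≤ K :=
      LieSubmodule.lieSpan_le.2 (by intro y hy; rcases hy with rfl; exact hv0K)
    intro m
    exact hle (by rw [hgen]; trivial)
  -- ψ : M' → M
  let ψ : (ℤ →₀ ℂ) →ₗ[ℂ] M := Finsupp.linearCombination ℂ (chain E F v₀)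
  have hψs : ∀ (n : ℤ) (c : ℂ), ψ (single n c) = c • chain E F v₀ n := fun n c =>
    Finsupp.linearCombination_single (R := ℂ) (v := chain E F v₀) c n
  have hch0 : (chain E F v₀ 0 : M) = v₀ := rfl
  have hψv : ψ (single 0 1) = v₀ := by rw [hψs, hch0, one_smul]
  have hψe : ∀ (x : g) (f : ℤ →₀ ℂ), ψ ⁅x, f⁆ = ⁅x, ψ f⁆ := by
    apply hef_cases hspan (P := fun x => ∀ f : ℤ →₀ ℂ, ψ ⁅x,f⁆ = ⁅x, ψ f⁆)
    · intro f
      induction f using Finsupp.induction_linear with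
      | zero => simp
      | add f1 f2 hf1 hf2 => rw [lie_add, map_add, hf1, hf2, map_add, lie_add]
      | single n c =>
        rw [brkt, hρH, Hop_single, map_smul, hψs, lie_smul, chain_H hHE hHF hHv n]
        module
    · intro f
      induction f using Finsupp.induction_linear with
      | zero => simp
      | add f1 f2 hf1 hf2 => rw [lie_add, map_add, hf1, hf2, map_add, lie_add]
      | single n c =>
        rw [brkt, hρE, Eop_single, map_smul, hψs, hψs, lie_smul, chain_E hHE hHF hEF hHv hcasM n]
        module
    · intro f
      induction f using Finsupp.induction_linear with
      | zero => simp
      | add f1 f2 hf1 hf2 => rw [lie_add, map_add, hf1, hf2, map_add, lie_add]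
      | single n c =>
        rw [brkt, hρF, Fop_single, hψs, hψs, lie_smul, chain_F hHE hHF hEF hHv hcasM n]
    · intro f; simp
    · intro x y hx hy f
      rw [add_lie, map_add, hx f, hy f, add_lie]
    · intro c x hx f
      rw [smul_lie, map_smul, hx f, smul_lie]
  -- uniqueness: ψ ∘ φ = id, so φ is injective
  obtain ⟨θ, -, hθu⟩ := huniv M v₀ hHv hΩv
  have h1 : ψ ∘ₗ φ = θ := hθu _ ⟨fun x m => by
    simp only [LinearMap.comp_apply, hφ, hψe], by
    simp only [LinearMap.comp_apply, hφv, hψv]⟩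
  have h2 : (LinearMap.id : M →ₗ[ℂ] M) = θ := hθu _ ⟨fun x m => rfl, rfl⟩
  have hlinv : ∀ m : M, ψ (φ m) = m := fun m => by
    have := congrArg (fun L : M →ₗ[ℂ] M => L m) (h1.trans h2.symm)
    simpa using this
  have φinj : Function.Injective φ := fun a c h => by rw [← hlinv a, ← hlinv c, h]
  have Finj : Function.Injective (fun m : M => ⁅F, m⁆) := by
    intro a c h
    simp only at h
    apply φinj
    apply Fop_inj
    calc Fop (φ a) = φ ⁅F, a⁆ := (hφF a).symm
      _ = φ ⁅F, c⁆ := by rw [h]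
      _ = Fop (φ c) := hφF c
  -- highest weight vectors
  have hw0 : (⁅F, v₀⁆ : M) ≠ 0 := fun h => hv₀ (Finj (show ⁅F, v₀⁆ = ⁅F, (0:M)⁆ by rw [h, lie_zero]))
  have hu0 : (⁅F, ⁅F, v₀⁆⁆ : M) ≠ 0 := fun h => hw0 (Finj (show ⁅F, ⁅F,v₀⁆⁆ = ⁅F, (0:M)⁆ by rw [h, lie_zero]))
  have hwH : ⁅H, ⁅F, v₀⁆⁆ = (0 : M) := by
    rw [leibniz_lie, hHF, smul_lie, hHv, lie_smul]; module
  have hwE : ⁅E, ⁅F, v₀⁆⁆ = (0 : M) := by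
    have h := eigEF hEF hHv (hcasM v₀)
    rw [h]
    norm_num
  have huH : ⁅H, ⁅F, ⁅F, v₀⁆⁆⁆ = (-2:ℂ) • ⁅F, ⁅F, v₀⁆⁆ := by
    rw [leibniz_lie, hHF, smul_lie, hwH, lie_zero]; module
  have huE : ⁅E, ⁅F, ⁅F, v₀⁆⁆⁆ = (0 : M) := by
    have h0' : ⁅H, (⁅F, v₀⁆ : M)⁆ = (0:ℂ) • ⁅F, v₀⁆ := by rw [hwH, zero_smul]
    have h := eigEF hEF h0' (hcasM ⁅F, v₀⁆)
    rw [h]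
    norm_num
  -- the proper nonzero Lie submodule
  have hstab : ∀ x : g, ∀ m : M, (∀ n : ℤ, -2 < n → φ m n = 0) →
      ∀ n : ℤ, -2 < n → φ ⁅x, m⁆ n = 0 := by
    apply hef_cases hspan (P := fun x => ∀ m : M, (∀ n : ℤ, -2 < n → φ m n = 0) →
      ∀ n : ℤ, -2 < n → φ ⁅x, m⁆ n = 0)
    · intro m hm n hn
      rw [hφH, Hop_apply, hm n hn, mul_zero]
    · intro m hm n hn
      rw [hφE, Eop_apply]
      by_cases hn1 : n = -1
      · subst hn1
        rw [show cE ((-1:ℤ)-1) = 0 by rw [cE]; norm_num, zero_mul]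
      · rw [hm (n-1) (by omega), mul_zero]
    · intro m hm n hn
      rw [hφF, Fop_apply, hm (n+1) (by omega)]
    · intro m hm n hn
      rw [zero_lie, map_zero]
      rfl
    · intro x y hx hy m hm n hn
      rw [add_lie, map_add, Finsupp.add_apply, hx m hm n hn, hy m hm n hn, add_zero]
    · intro c x hx m hm n hn
      rw [smul_lie, map_smul, Finsupp.smul_apply, hx m hm n hn, smul_zero]
  let Q : LieSubmodule ℂ g M :=
    { carrier := {m : M | ∀ n : ℤ, -2 < n → φ m n = 0}
      add_mem' := by
        intro a c ha hc n hn
        rw [map_add, Finsupp.add_apply, ha n hn, hc n hn, add_zero]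
      zero_mem' := by
        intro n hn
        rw [map_zero]
        rfl
      smul_mem' := by
        intro c a ha n hn
        rw [map_smul, Finsupp.smul_apply, ha n hn, smul_zero]
      lie_mem := by
        intro x m hm
        exact hstab x m hm }
  have hφu : φ ⁅F, ⁅F, v₀⁆⁆ = single (-2 : ℤ) 1 := by
    rw [hφF, hφF, hφv, Fop_single, Fop_single]
    norm_num
  have huQ : ⁅F, ⁅F, v₀⁆⁆ ∈ Q := by
    intro n hn
    rw [hφu, Finsupp.single_apply, if_neg (by omega)]
  refine ⟨⟨Q, ?_, ?_⟩, ⟨⁅F, ⁅F, v₀⁆⁆, ⁅F, v₀⁆, hu0, hw0, huE, hwE, huH, hwH, rfl⟩, Finj⟩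
  · intro hQ
    rw [hQ] at huQ
    exact hu0 ((LieSubmodule.mem_bot _).1 huQ)
  · intro hQ
    have hv : v₀ ∈ Q := by rw [hQ]; exact LieSubmodule.mem_top _
    have := hv 0 (by norm_num)
    rw [hφv, Finsupp.single_eq_same] at this
    exact one_ne_zero this
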